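/- Let λ > 0, let x₁, x₂, …, x_t ∈ ℝ^N, and define V₀ = λI and Vᵢ = V_{i−1} + xᵢxᵢᵀ for i = 1,…,t. Then log(det(V_t)/det(λI)) ≤ Σ_{i=1}^{t} xᵢᵀ V_{i−1}^{−1} xᵢ. -/

import Mathlib

open Matrix

theorem statement2 {N : ℕ} (lam : ℝ) (hlam : 0 < lam) (t : ℕ) (x : ℕ → Fin N → ℝ)
    (V : ℕ → Matrix (Fin N) (Fin N) ℝ)
    (hV0 : V 0 = lam • (1 : Matrix (Fin N) (Fin N) ℝ))
    (hV : ∀ i, V (i + 1) = V i + Matrix.vecMulVec (x i) (x i)) :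
    Real.log ((V t).det / (lam • (1 : Matrix (Fin N) (Fin N) ℝ)).det) ≤
      ∑ i ∈ Finset.range t, x i ⬝ᵥ ((V i)⁻¹ *ᵥ x i) := by
  -- each V i is positive definite
  have hPD : ∀ i, (V i).PosDef := by
    intro i
    induction i with
    | zero =>
      rw [hV0]
      rw [Matrix.smul_one_eq_diagonal]
      exact Matrix.posDef_diagonal_iff.mpr fun _ => hlam
    | succ i ih =>
      rw [hV i]
      refine ih.add_posSemidef ?_
      have : Matrix.vecMulVec (x i) (x i)
          = Matrix.replicateCol Unit (x i) * (Matrix.replicateCol Unit (x i))ᴴ := by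
        rw [Matrix.vecMulVec_eq Unit]
        rw [Matrix.conjTranspose_replicateCol, star_trivial]
      rw [this]
      exact Matrix.posSemidef_self_mul_conjTranspose _
  -- quadratic forms are nonneg
  have hq : ∀ i, 0 ≤ x i ⬝ᵥ ((V i)⁻¹ *ᵥ x i) := by
    intro i
    have := ((hPD i).inv.posSemidef).dotProduct_mulVec_nonneg (x i)
    simpa using this
  -- determinant recursion
  have hdet : ∀ i, (V (i + 1)).det = (V i).det * (1 + x i ⬝ᵥ ((V i)⁻¹ *ᵥ x i)) := by
    intro i
    have hU : IsUnit (V i).det := (hPD i).det_pos.ne'.isUnit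
    rw [hV i, Matrix.vecMulVec_eq Unit, Matrix.det_add_replicateCol_mul_replicateRow hU]
    congr 1
    rw [Matrix.det_unique]
    simp only [Matrix.add_apply, Matrix.one_apply_eq, Matrix.mul_apply, Matrix.replicateRow_apply,
      Matrix.replicateCol_apply, dotProduct, Matrix.mulVec, Finset.sum_mul, Finset.mul_sum]
    congr 1
    rw [Finset.sum_comm]
    exact Finset.sum_congr rfl fun a _ => Finset.sum_congr rfl fun b _ => by ring
  have hdetpos : ∀ i, 0 < (V i).det := fun i => (hPD i).det_pos
  have hdet0 : (lam • (1 : Matrix (Fin N) (Fin N) ℝ)).det = (V 0).det := by rw [hV0]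
  rw [hdet0]
  induction t with
  | zero => simp [div_self (hdetpos 0).ne']
  | succ n ih =>
    rw [Finset.sum_range_succ, hdet n]
    have h1 : 0 < 1 + x n ⬝ᵥ ((V n)⁻¹ *ᵥ x n) := by linarith [hq n]
    have heq : (V n).det * (1 + x n ⬝ᵥ ((V n)⁻¹ *ᵥ x n)) / (V 0).det
        = ((V n).det / (V 0).det) * (1 + x n ⬝ᵥ ((V n)⁻¹ *ᵥ x n)) := by ring
    rw [heq, Real.log_mul (div_pos (hdetpos n) (hdetpos 0)).ne' h1.ne']
    exact add_le_add ih (by linarith [Real.log_le_sub_one_of_pos h1])
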